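/- Weighted pointwise bound for the nonlinear collision operator: for every 0 < ϱ < 1/4 there exists a constant C_ϱ such that for every bounded measurable h : ℝ³ → ℝ and every v ∈ ℝ³, | 𝔴_ϱ(v) Γ( h/𝔴_ϱ , h/𝔴_ϱ )(v) | ≤ C_ϱ (1+|v|) ‖h‖_{L^∞(ℝ³)}², where 𝔴_ϱ(v) = e^{ϱ|v|²}. -/

import Mathlib

open MeasureTheory Real
open scoped RealInnerProductSpace

noncomputable section

/-- The surface measure on the unit sphere `S² ⊂ ℝ³`. -/
def sphereMeasure : Measure (Metric.sphere (0 : EuclideanSpace ℝ (Fin 3)) 1) :=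
  (volume : Measure (EuclideanSpace ℝ (Fin 3))).toSphere

/-- The global Maxwellian `μ(v) = (2π)^{−3/2} e^{−|v|²/2}`. -/
def globalMaxwellian (v : EuclideanSpace ℝ (Fin 3)) : ℝ :=
  (2 * Real.pi) ^ (-(3 : ℝ) / 2) * Real.exp (-‖v‖ ^ 2 / 2)

/-- The nonlinear collision form `Γ(f,g) = Γ₊(f,g) − Γ₋(f,g)`, written as gain minus loss:
`Γ(f,g)(v) = ∫∫ |(v−v⋆)·𝔲| √μ(v⋆) (f(v′)g(v⋆′) + g(v′)f(v⋆′)) d𝔲 dv⋆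
           − ∫∫ |(v−v⋆)·𝔲| √μ(v⋆) (f(v)g(v⋆) + g(v)f(v⋆)) d𝔲 dv⋆`. -/
def gammaOp (f g : EuclideanSpace ℝ (Fin 3) → ℝ) (v : EuclideanSpace ℝ (Fin 3)) : ℝ :=
  (∫ vs : EuclideanSpace ℝ (Fin 3),
    ∫ u : Metric.sphere (0 : EuclideanSpace ℝ (Fin 3)) 1,
      |⟪v - vs, (u : EuclideanSpace ℝ (Fin 3))⟫| * Real.sqrt (globalMaxwellian vs) *
        (f (v - ⟪v - vs, (u : EuclideanSpace ℝ (Fin 3))⟫ • (u : EuclideanSpace ℝ (Fin 3))) *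
            g (vs + ⟪v - vs, (u : EuclideanSpace ℝ (Fin 3))⟫ • (u : EuclideanSpace ℝ (Fin 3))) +
          g (v - ⟪v - vs, (u : EuclideanSpace ℝ (Fin 3))⟫ • (u : EuclideanSpace ℝ (Fin 3))) *
            f (vs + ⟪v - vs, (u : EuclideanSpace ℝ (Fin 3))⟫ • (u : EuclideanSpace ℝ (Fin 3))))
      ∂sphereMeasure) -
  ∫ vs : EuclideanSpace ℝ (Fin 3),
    ∫ u : Metric.sphere (0 : EuclideanSpace ℝ (Fin 3)) 1,
      |⟪v - vs, (u : EuclideanSpace ℝ (Fin 3))⟫| * Real.sqrt (globalMaxwellian vs) *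
        (f v * g vs + g v * f vs) ∂sphereMeasure

/-- The Gaussian weight `𝔴_ϱ(v) = e^{ϱ|v|²}`. -/
def gaussWeight (ϱ : ℝ) (v : EuclideanSpace ℝ (Fin 3)) : ℝ := Real.exp (ϱ * ‖v‖ ^ 2)

instance : IsFiniteMeasure sphereMeasure :=
  inferInstanceAs (IsFiniteMeasure (volume : Measure (EuclideanSpace ℝ (Fin 3))).toSphere)

private lemma aux_gauss_int :
    Integrable (fun v : EuclideanSpace ℝ (Fin 3) => Real.exp (-(1/8 : ℝ) * ‖v‖ ^ 2)) := by
  have h := GaussianFourier.integrable_cexp_neg_mul_sq_norm_add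
    (V := EuclideanSpace ℝ (Fin 3)) (b := (1/8 : ℂ)) (by norm_num) 0 0
  have h2 := h.norm
  refine h2.congr (Filter.Eventually.of_forall fun v => ?_)
  simp only [zero_mul, add_zero, Complex.norm_exp]
  congr 1
  push_cast
  simp [Complex.mul_re, ← Complex.ofReal_pow]

private lemma aux_integrable :
    Integrable (fun v : EuclideanSpace ℝ (Fin 3) => (1 + ‖v‖) * Real.exp (-‖v‖ ^ 2 / 4)) := by
  refine (aux_gauss_int.const_mul (Real.exp 2)).mono ?_ ?_
  · exact (Continuous.aestronglyMeasurable (by continuity))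
  · refine Filter.Eventually.of_forall fun v => ?_
    have hx : (0:ℝ) ≤ ‖v‖ := norm_nonneg v
    rw [Real.norm_eq_abs, Real.norm_eq_abs, abs_of_nonneg (by positivity),
      abs_of_nonneg (by positivity)]
    have h1 : 1 + ‖v‖ ≤ Real.exp ‖v‖ := by
      have := Real.add_one_le_exp ‖v‖; linarith
    calc (1 + ‖v‖) * Real.exp (-‖v‖ ^ 2 / 4)
        ≤ Real.exp ‖v‖ * Real.exp (-‖v‖ ^ 2 / 4) := by gcongr
      _ = Real.exp (‖v‖ + -‖v‖ ^ 2 / 4) := (Real.exp_add _ _).symm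
      _ ≤ Real.exp (2 + -(1/8) * ‖v‖ ^ 2) := by
          apply Real.exp_le_exp.mpr; nlinarith [sq_nonneg (‖v‖ - 4)]
      _ = Real.exp 2 * Real.exp (-(1/8) * ‖v‖ ^ 2) := Real.exp_add _ _

private lemma sqrt_maxwellian_le (vs : EuclideanSpace ℝ (Fin 3)) :
    Real.sqrt (globalMaxwellian vs) ≤ Real.exp (-‖vs‖ ^ 2 / 4) := by
  have h0 : (2 * Real.pi) ^ (-(3:ℝ)/2) ≤ 1 :=
    Real.rpow_le_one_of_one_le_of_nonpos (by nlinarith [Real.pi_gt_three]) (by norm_num)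
  have h1 : globalMaxwellian vs ≤ Real.exp (-‖vs‖ ^ 2 / 2) := by
    unfold globalMaxwellian
    nlinarith [Real.exp_pos (-‖vs‖ ^ 2 / 2)]
  calc Real.sqrt (globalMaxwellian vs)
      ≤ Real.sqrt (Real.exp (-‖vs‖ ^ 2 / 2)) := Real.sqrt_le_sqrt h1
    _ = Real.exp (-‖vs‖ ^ 2 / 2 / 2) := (Real.exp_half _).symm
    _ = Real.exp (-‖vs‖ ^ 2 / 4) := by ring_nf

private lemma energy_id (v vs u : EuclideanSpace ℝ (Fin 3)) (hu : ‖u‖ = 1) :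
    ‖v - ⟪v - vs, u⟫ • u‖ ^ 2 + ‖vs + ⟪v - vs, u⟫ • u‖ ^ 2 = ‖v‖ ^ 2 + ‖vs‖ ^ 2 := by
  have hcu : ‖⟪v - vs, u⟫ • u‖ ^ 2 = ⟪v - vs, u⟫ ^ 2 := by
    rw [norm_smul, hu, Real.norm_eq_abs, mul_one, sq_abs]
  rw [norm_sub_sq_real, norm_add_sq_real, real_inner_smul_right, real_inner_smul_right, hcu]
  have key : ⟪v - vs, u⟫ = ⟪v, u⟫ - ⟪vs, u⟫ := inner_sub_left _ _ _
  rw [key]; ring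

private lemma pt_bound {ϱ M : ℝ} (h : EuclideanSpace ℝ (Fin 3) → ℝ)
    (hM : ∀ v, |h v| ≤ M) (v vs a b : EuclideanSpace ℝ (Fin 3))
    (hw : gaussWeight ϱ v ≤ gaussWeight ϱ a * gaussWeight ϱ b) (c : ℝ)
    (hc : |c| ≤ (1 + ‖v‖) * (1 + ‖vs‖)) :
    |gaussWeight ϱ v * (|c| * Real.sqrt (globalMaxwellian vs) *
      (h a / gaussWeight ϱ a * (h b / gaussWeight ϱ b) +
       h a / gaussWeight ϱ a * (h b / gaussWeight ϱ b)))| ≤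
    2 * M ^ 2 * (1 + ‖v‖) * ((1 + ‖vs‖) * Real.exp (-‖vs‖ ^ 2 / 4)) := by
  have M0 : 0 ≤ M := (abs_nonneg (h v)).trans (hM v)
  have wv : 0 < gaussWeight ϱ v := Real.exp_pos _
  have wa : 0 < gaussWeight ϱ a := Real.exp_pos _
  have wb : 0 < gaussWeight ϱ b := Real.exp_pos _
  set t := h a / gaussWeight ϱ a * (h b / gaussWeight ϱ b) with ht
  have key : gaussWeight ϱ v * |t| ≤ M ^ 2 := by
    have h1 : |t| = |h a| * |h b| / (gaussWeight ϱ a * gaussWeight ϱ b) := by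
      rw [ht, abs_mul, abs_div, abs_div, abs_of_pos wa, abs_of_pos wb]
      ring
    rw [h1]
    have h2 : gaussWeight ϱ v * (|h a| * |h b| / (gaussWeight ϱ a * gaussWeight ϱ b))
        ≤ (gaussWeight ϱ a * gaussWeight ϱ b) *
          (M * M / (gaussWeight ϱ a * gaussWeight ϱ b)) := by
      gcongr <;> first | exact hw | exact hM a | exact hM b | exact abs_nonneg _ | positivity
    calc _ ≤ _ := h2
      _ = M ^ 2 := by field_simp
  have habs : |gaussWeight ϱ v * (|c| * Real.sqrt (globalMaxwellian vs) * (t + t))|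
      = 2 * (gaussWeight ϱ v * |t|) * (|c| * Real.sqrt (globalMaxwellian vs)) := by
    rw [abs_mul, abs_mul, abs_mul, abs_abs, abs_of_pos wv,
      abs_of_nonneg (Real.sqrt_nonneg _), ← two_mul t, abs_mul, abs_two]
    ring
  rw [habs]
  have hs := sqrt_maxwellian_le vs
  calc 2 * (gaussWeight ϱ v * |t|) * (|c| * Real.sqrt (globalMaxwellian vs))
      ≤ 2 * M ^ 2 * ((1 + ‖v‖) * (1 + ‖vs‖) * Real.exp (-‖vs‖ ^ 2 / 4)) := by
        have hc2 : |c| * Real.sqrt (globalMaxwellian vs)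
            ≤ (1 + ‖v‖) * (1 + ‖vs‖) * Real.exp (-‖vs‖ ^ 2 / 4) := by
          gcongr <;> first | exact hc | exact hs | exact Real.sqrt_nonneg _ | positivity
        have hkey2 : 0 ≤ 2 * (gaussWeight ϱ v * |t|) := by positivity
        nlinarith [Real.sqrt_nonneg (globalMaxwellian vs), sq_nonneg M,
          mul_nonneg (mul_nonneg (by positivity : (0:ℝ) ≤ 1 + ‖v‖)
            (by positivity : (0:ℝ) ≤ 1 + ‖vs‖)) (Real.exp_pos (-‖vs‖ ^ 2 / 4)).le]
    _ = 2 * M ^ 2 * (1 + ‖v‖) * ((1 + ‖vs‖) * Real.exp (-‖vs‖ ^ 2 / 4)) := by ring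

/-- Weighted pointwise bound for the nonlinear collision operator: for `0 < ϱ < 1/4` there
is a constant `C_ϱ` such that for every bounded measurable `h` and every `v`,
`|𝔴_ϱ(v) Γ(h/𝔴_ϱ, h/𝔴_ϱ)(v)| ≤ C_ϱ (1+|v|) ‖h‖_∞²`. -/
theorem weighted_gamma_bound (ϱ : ℝ) (hϱ₀ : 0 < ϱ) (hϱ₁ : ϱ < 1 / 4) :
    ∃ C : ℝ, 0 < C ∧
      ∀ h : EuclideanSpace ℝ (Fin 3) → ℝ, Measurable h →
        ∀ M : ℝ, (∀ v, |h v| ≤ M) →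
          ∀ v : EuclideanSpace ℝ (Fin 3),
            |gaussWeight ϱ v *
                gammaOp (fun w => h w / gaussWeight ϱ w) (fun w => h w / gaussWeight ϱ w) v| ≤
              C * (1 + ‖v‖) * M ^ 2 := by
  classical
  set Sr := (sphereMeasure Set.univ).toReal with hSrdef
  set A := ∫ vs : EuclideanSpace ℝ (Fin 3), (1 + ‖vs‖) * Real.exp (-‖vs‖ ^ 2 / 4) with hAdef
  have hSr0 : 0 ≤ Sr := ENNReal.toReal_nonneg
  have hA0 : 0 ≤ A := integral_nonneg fun x => by positivity
  refine ⟨4 * Sr * A + 1, by nlinarith, ?_⟩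
  intro h hmeas M hM v
  have M0 : 0 ≤ M := (abs_nonneg (h v)).trans (hM v)
  have wvpos : 0 < gaussWeight ϱ v := Real.exp_pos _
  set K := 2 * M ^ 2 * (1 + ‖v‖) with hKdef
  have hK0 : 0 ≤ K := by positivity
  -- generic bound for a double integral with pointwise-bounded integrand
  have main : ∀ (F : EuclideanSpace ℝ (Fin 3) →
        Metric.sphere (0 : EuclideanSpace ℝ (Fin 3)) 1 → ℝ),
      (∀ vs u, |gaussWeight ϱ v * F vs u| ≤ K * ((1 + ‖vs‖) * Real.exp (-‖vs‖ ^ 2 / 4))) →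
      |gaussWeight ϱ v * ∫ vs, ∫ u, F vs u ∂sphereMeasure| ≤ Sr * (K * A) := by
    intro F hF
    have inner_bd : ∀ vs, gaussWeight ϱ v * ‖∫ u, F vs u ∂sphereMeasure‖
        ≤ Sr * (K * ((1 + ‖vs‖) * Real.exp (-‖vs‖ ^ 2 / 4))) := by
      intro vs
      have e1 : gaussWeight ϱ v * ‖∫ u, F vs u ∂sphereMeasure‖
          = ‖∫ u, gaussWeight ϱ v * F vs u ∂sphereMeasure‖ := by
        rw [integral_const_mul, norm_mul, Real.norm_eq_abs (gaussWeight ϱ v), abs_of_pos wvpos]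
      rw [e1]
      calc ‖∫ u, gaussWeight ϱ v * F vs u ∂sphereMeasure‖
          ≤ ∫ u, ‖gaussWeight ϱ v * F vs u‖ ∂sphereMeasure :=
            norm_integral_le_integral_norm _
        _ ≤ ∫ _u : Metric.sphere (0 : EuclideanSpace ℝ (Fin 3)) 1,
              K * ((1 + ‖vs‖) * Real.exp (-‖vs‖ ^ 2 / 4)) ∂sphereMeasure := by
            refine integral_mono_of_nonneg
              (Filter.Eventually.of_forall fun u => norm_nonneg _)
              (integrable_const _) (Filter.Eventually.of_forall fun u => ?_)
            simpa only [Real.norm_eq_abs] using hF vs u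
        _ = Sr * (K * ((1 + ‖vs‖) * Real.exp (-‖vs‖ ^ 2 / 4))) := by
            rw [integral_const, smul_eq_mul, measureReal_def, ← hSrdef]
    have hGint : Integrable (fun vs : EuclideanSpace ℝ (Fin 3) =>
        Sr * (K * ((1 + ‖vs‖) * Real.exp (-‖vs‖ ^ 2 / 4)))) := by
      simpa [mul_assoc] using aux_integrable.const_mul (Sr * K)
    calc |gaussWeight ϱ v * ∫ vs, ∫ u, F vs u ∂sphereMeasure|
        = gaussWeight ϱ v * |∫ vs, ∫ u, F vs u ∂sphereMeasure| := by
          rw [abs_mul, abs_of_pos wvpos]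
      _ ≤ gaussWeight ϱ v * ∫ vs, ‖∫ u, F vs u ∂sphereMeasure‖ := by
          rw [← Real.norm_eq_abs]
          exact mul_le_mul_of_nonneg_left (norm_integral_le_integral_norm _) wvpos.le
      _ = ∫ vs, gaussWeight ϱ v * ‖∫ u, F vs u ∂sphereMeasure‖ :=
          (integral_const_mul _ _).symm
      _ ≤ ∫ vs, Sr * (K * ((1 + ‖vs‖) * Real.exp (-‖vs‖ ^ 2 / 4))) := by
          refine integral_mono_of_nonneg
            (Filter.Eventually.of_forall fun vs => by positivity) hGint
            (Filter.Eventually.of_forall fun vs => inner_bd vs)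
      _ = Sr * (K * A) := by
          rw [integral_const_mul, integral_const_mul, ← hAdef]
  -- bound on the inner product factor
  have hc : ∀ (vs : EuclideanSpace ℝ (Fin 3))
      (u : Metric.sphere (0 : EuclideanSpace ℝ (Fin 3)) 1),
      |⟪v - vs, (u : EuclideanSpace ℝ (Fin 3))⟫| ≤ (1 + ‖v‖) * (1 + ‖vs‖) := by
    intro vs u
    calc |⟪v - vs, (u : EuclideanSpace ℝ (Fin 3))⟫|
        ≤ ‖v - vs‖ * ‖(u : EuclideanSpace ℝ (Fin 3))‖ := abs_real_inner_le_norm _ _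
      _ = ‖v - vs‖ := by rw [norm_eq_of_mem_sphere u, mul_one]
      _ ≤ ‖v‖ + ‖vs‖ := norm_sub_le _ _
      _ ≤ (1 + ‖v‖) * (1 + ‖vs‖) := by nlinarith [norm_nonneg v, norm_nonneg vs]
  -- gain term
  have g1 : |gaussWeight ϱ v * ∫ vs : EuclideanSpace ℝ (Fin 3),
      ∫ u : Metric.sphere (0 : EuclideanSpace ℝ (Fin 3)) 1,
        |⟪v - vs, (u : EuclideanSpace ℝ (Fin 3))⟫| * Real.sqrt (globalMaxwellian vs) *
          (h (v - ⟪v - vs, (u : EuclideanSpace ℝ (Fin 3))⟫ • (u : EuclideanSpace ℝ (Fin 3))) /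
              gaussWeight ϱ (v - ⟪v - vs, (u : EuclideanSpace ℝ (Fin 3))⟫ •
                (u : EuclideanSpace ℝ (Fin 3))) *
            (h (vs + ⟪v - vs, (u : EuclideanSpace ℝ (Fin 3))⟫ • (u : EuclideanSpace ℝ (Fin 3))) /
              gaussWeight ϱ (vs + ⟪v - vs, (u : EuclideanSpace ℝ (Fin 3))⟫ •
                (u : EuclideanSpace ℝ (Fin 3)))) +
           h (v - ⟪v - vs, (u : EuclideanSpace ℝ (Fin 3))⟫ • (u : EuclideanSpace ℝ (Fin 3))) /
              gaussWeight ϱ (v - ⟪v - vs, (u : EuclideanSpace ℝ (Fin 3))⟫ •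
                (u : EuclideanSpace ℝ (Fin 3))) *
            (h (vs + ⟪v - vs, (u : EuclideanSpace ℝ (Fin 3))⟫ • (u : EuclideanSpace ℝ (Fin 3))) /
              gaussWeight ϱ (vs + ⟪v - vs, (u : EuclideanSpace ℝ (Fin 3))⟫ •
                (u : EuclideanSpace ℝ (Fin 3)))))
      ∂sphereMeasure| ≤ Sr * (K * A) := by
    refine main _ fun vs u => ?_
    have hu : ‖(u : EuclideanSpace ℝ (Fin 3))‖ = 1 := norm_eq_of_mem_sphere u
    have he := energy_id v vs (u : EuclideanSpace ℝ (Fin 3)) hu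
    have hw : gaussWeight ϱ v ≤
        gaussWeight ϱ (v - ⟪v - vs, (u : EuclideanSpace ℝ (Fin 3))⟫ •
            (u : EuclideanSpace ℝ (Fin 3))) *
        gaussWeight ϱ (vs + ⟪v - vs, (u : EuclideanSpace ℝ (Fin 3))⟫ •
            (u : EuclideanSpace ℝ (Fin 3))) := by
      unfold gaussWeight
      rw [← Real.exp_add]
      apply Real.exp_le_exp.mpr
      nlinarith [sq_nonneg ‖vs‖]
    exact pt_bound h hM v vs _ _ hw _ (hc vs u)
  -- loss term
  have g2 : |gaussWeight ϱ v * ∫ vs : EuclideanSpace ℝ (Fin 3),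
      ∫ u : Metric.sphere (0 : EuclideanSpace ℝ (Fin 3)) 1,
        |⟪v - vs, (u : EuclideanSpace ℝ (Fin 3))⟫| * Real.sqrt (globalMaxwellian vs) *
          (h v / gaussWeight ϱ v * (h vs / gaussWeight ϱ vs) +
           h v / gaussWeight ϱ v * (h vs / gaussWeight ϱ vs))
      ∂sphereMeasure| ≤ Sr * (K * A) := by
    refine main _ fun vs u => ?_
    have hw : gaussWeight ϱ v ≤ gaussWeight ϱ v * gaussWeight ϱ vs :=
      le_mul_of_one_le_right wvpos.le (Real.one_le_exp (by positivity))
    exact pt_bound h hM v vs _ _ hw _ (hc vs u)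
  have final : |gaussWeight ϱ v *
      gammaOp (fun w => h w / gaussWeight ϱ w) (fun w => h w / gaussWeight ϱ w) v| ≤
      Sr * (K * A) + Sr * (K * A) := by
    rw [gammaOp, mul_sub]
    exact (abs_sub _ _).trans (add_le_add g1 g2)
  calc |gaussWeight ϱ v *
      gammaOp (fun w => h w / gaussWeight ϱ w) (fun w => h w / gaussWeight ϱ w) v|
      ≤ Sr * (K * A) + Sr * (K * A) := final
    _ ≤ (4 * Sr * A + 1) * (1 + ‖v‖) * M ^ 2 := by
        have h1 : (0:ℝ) ≤ (1 + ‖v‖) * M ^ 2 := by positivity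
        rw [hKdef]
        nlinarith [mul_nonneg (mul_nonneg hSr0 hA0) h1]
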